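/- Let μ ∈ (0,1], let N > 0, I > 0 and ρ₀ < N be real numbers satisfying I/(N − ρ₀) ≤ √(2/(μπ)). Then there exists a unique φ_w ≤ 0 such that (N − ρ₀)·e^{φ_w} = √μ·I·(√(2π) − ∫_{√(−2φ_w)}^{∞} e^{−v²/2} dv). Equivalently, setting n₀ = √(π/2)·(N − ρ₀)/(√(2π) − ∫_{√(−2φ_w)}^{∞} e^{−v²/2} dv), the zero-current condition I = √(2/(πμ))·n₀·e^{φ_w} holds. -/

import Mathlib

open MeasureTheory Set

noncomputable def gaussTail (a : ℝ) : ℝ := ∫ v in Ioi a, Real.exp (-(v ^ 2) / 2)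

lemma gaussFun_eq : (fun v : ℝ => Real.exp (-(v ^ 2) / 2)) = fun v => Real.exp (-(1/2 : ℝ) * v ^ 2) := by
  funext v; congr 1; ring

lemma integrable_gauss : Integrable (fun v : ℝ => Real.exp (-(v ^ 2) / 2)) := by
  rw [gaussFun_eq]; exact integrable_exp_neg_mul_sq (by norm_num)

lemma gaussTail_anti : Antitone gaussTail := by
  intro a b hab
  exact setIntegral_mono_set integrable_gauss.integrableOn
    (Filter.Eventually.of_forall fun x => (Real.exp_pos _).le)
    (HasSubset.Subset.eventuallyLE (Ioi_subset_Ioi hab))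

lemma gaussTail_zero : gaussTail 0 = Real.sqrt (2 * Real.pi) / 2 := by
  rw [gaussTail, gaussFun_eq]
  simp_rw [neg_mul]
  rw [show (fun v : ℝ => Real.exp (-((1/2 : ℝ) * v ^ 2))) = fun v => Real.exp (-(1/2 : ℝ) * v ^ 2) by
    funext v; rw [neg_mul]]
  rw [integral_gaussian_Ioi, show Real.pi / (1/2 : ℝ) = 2 * Real.pi by ring]

lemma gaussTail_split (a : ℝ) (ha : 0 ≤ a) :
    gaussTail a = gaussTail 0 - ∫ v in (0:ℝ)..a, Real.exp (-(v ^ 2) / 2) := by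
  have hu : Ioi (0:ℝ) = Ioc 0 a ∪ Ioi a := (Ioc_union_Ioi_eq_Ioi ha).symm
  have := setIntegral_union (f := fun v : ℝ => Real.exp (-(v ^ 2) / 2)) (μ := volume)
    (s := Ioc 0 a) (t := Ioi a)
    (Ioc_disjoint_Ioi le_rfl) measurableSet_Ioi
    integrable_gauss.integrableOn integrable_gauss.integrableOn
  rw [intervalIntegral.integral_of_le ha]
  unfold gaussTail
  rw [hu, this]; ring

theorem floating_potential_exists_unique
    (μ N I ρ₀ : ℝ) (hμ : μ ∈ Ioc (0 : ℝ) 1) (hN : 0 < N) (hI : 0 < I) (hρ₀ : ρ₀ < N)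
    (hBohm : I / (N - ρ₀) ≤ Real.sqrt (2 / (μ * Real.pi))) :
    ∃! φw : ℝ, φw ≤ 0 ∧
      (N - ρ₀) * Real.exp φw =
        Real.sqrt μ * I *
          (Real.sqrt (2 * Real.pi) -
            ∫ v in Ioi (Real.sqrt (-2 * φw)), Real.exp (-(v ^ 2) / 2)) ∧
      I = Real.sqrt (2 / (Real.pi * μ)) *
            (Real.sqrt (Real.pi / 2) * (N - ρ₀) /
              (Real.sqrt (2 * Real.pi) -
                ∫ v in Ioi (Real.sqrt (-2 * φw)), Real.exp (-(v ^ 2) / 2))) *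
            Real.exp φw := by
  obtain ⟨hμ0, hμ1⟩ := hμ
  have hNρ : 0 < N - ρ₀ := sub_pos.mpr hρ₀
  have hc : 0 < Real.sqrt μ * I := mul_pos (Real.sqrt_pos.mpr hμ0) hI
  set c := Real.sqrt μ * I with hc_def
  -- the function h
  set h : ℝ → ℝ := fun φ =>
    (N - ρ₀) * Real.exp φ - c * (Real.sqrt (2 * Real.pi) - gaussTail (Real.sqrt (-2 * φ)))
    with hh_def
  have hsπ : 0 < Real.sqrt (2 * Real.pi) := Real.sqrt_pos.mpr (by positivity)
  -- gaussTail at √(-2φ) is at most gaussTail 0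
  have hg_le : ∀ φ : ℝ, gaussTail (Real.sqrt (-2 * φ)) ≤ Real.sqrt (2 * Real.pi) / 2 := by
    intro φ
    rw [← gaussTail_zero]
    exact gaussTail_anti (Real.sqrt_nonneg _)
  -- positivity of the denominator
  have hD_pos : ∀ φ : ℝ, 0 < Real.sqrt (2 * Real.pi) - gaussTail (Real.sqrt (-2 * φ)) := by
    intro φ
    have := hg_le φ
    nlinarith [hsπ]
  -- strict monotonicity of h
  have hmono : StrictMono h := by
    intro φ ψ hφψ
    have h1 : (N - ρ₀) * Real.exp φ < (N - ρ₀) * Real.exp ψ :=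
      mul_lt_mul_of_pos_left (Real.exp_lt_exp.mpr hφψ) hNρ
    have h2 : gaussTail (Real.sqrt (-2 * φ)) ≤ gaussTail (Real.sqrt (-2 * ψ)) :=
      gaussTail_anti (Real.sqrt_le_sqrt (by linarith))
    have h3 : c * (Real.sqrt (2 * Real.pi) - gaussTail (Real.sqrt (-2 * ψ)))
        ≤ c * (Real.sqrt (2 * Real.pi) - gaussTail (Real.sqrt (-2 * φ))) :=
      mul_le_mul_of_nonneg_left (by linarith) hc.le
    simp only [hh_def]
    linarith
  -- continuity of h
  have hcont : Continuous h := by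
    have hGc : Continuous fun b : ℝ => ∫ v in (0:ℝ)..b, Real.exp (-(v ^ 2) / 2) := by
      apply intervalIntegral.continuous_primitive
      intro a b
      exact (Real.continuous_exp.comp (by continuity)).intervalIntegrable a b
    have hrw : h = fun φ =>
        (N - ρ₀) * Real.exp φ - c * (Real.sqrt (2 * Real.pi) - gaussTail 0
          + ∫ v in (0:ℝ)..(Real.sqrt (-2 * φ)), Real.exp (-(v ^ 2) / 2)) := by
      funext φ
      simp only [hh_def]
      rw [gaussTail_split (Real.sqrt (-2 * φ)) (Real.sqrt_nonneg _)]
      ring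
    rw [hrw]
    apply Continuous.sub
    · exact continuous_const.mul Real.continuous_exp
    · apply continuous_const.mul
      apply Continuous.add continuous_const
      exact hGc.comp (Real.continuous_sqrt.comp (continuous_const.mul continuous_id))
  -- h 0 ≥ 0
  have hprod : Real.sqrt μ * Real.sqrt (2 / (μ * Real.pi)) * Real.sqrt (2 * Real.pi) = 2 := by
    rw [← Real.sqrt_mul hμ0.le, ← Real.sqrt_mul (by positivity)]
    rw [show μ * (2 / (μ * Real.pi)) * (2 * Real.pi) = 4 by
      field_simp
      ring]
    rw [show (4:ℝ) = 2 ^ 2 by norm_num, Real.sqrt_sq (by norm_num)]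
  have hIle : I ≤ Real.sqrt (2 / (μ * Real.pi)) * (N - ρ₀) := by
    rw [div_le_iff₀ hNρ] at hBohm
    linarith
  have hh0 : 0 ≤ h 0 := by
    have e1 : Real.sqrt (-2 * (0:ℝ)) = 0 := by norm_num
    have e2 : c * Real.sqrt (2 * Real.pi) ≤ 2 * (N - ρ₀) := by
      have := mul_le_mul_of_nonneg_left hIle
        (mul_pos (Real.sqrt_pos.mpr hμ0) hsπ).le
      nlinarith [Real.sqrt_nonneg μ, Real.sqrt_nonneg (2 / (μ * Real.pi))]
    simp only [hh_def, e1, gaussTail_zero, Real.exp_zero, mul_one]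
    linarith
  -- h φ₁ < 0
  set φ₁ : ℝ := min 0 (Real.log (c * Real.sqrt (2 * Real.pi) / (4 * (N - ρ₀)))) with hφ₁_def
  have hφ₁0 : φ₁ ≤ 0 := min_le_left _ _
  have hhφ₁ : h φ₁ < 0 := by
    have hx : 0 < c * Real.sqrt (2 * Real.pi) / (4 * (N - ρ₀)) := by positivity
    have he : Real.exp φ₁ ≤ c * Real.sqrt (2 * Real.pi) / (4 * (N - ρ₀)) := by
      calc Real.exp φ₁ ≤ Real.exp (Real.log (c * Real.sqrt (2 * Real.pi) / (4 * (N - ρ₀)))) :=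
            Real.exp_le_exp.mpr (min_le_right _ _)
        _ = _ := Real.exp_log hx
    have h4 : (N - ρ₀) * Real.exp φ₁ ≤ c * Real.sqrt (2 * Real.pi) / 4 := by
      calc (N - ρ₀) * Real.exp φ₁ ≤ (N - ρ₀) * (c * Real.sqrt (2 * Real.pi) / (4 * (N - ρ₀))) :=
            mul_le_mul_of_nonneg_left he hNρ.le
        _ = c * Real.sqrt (2 * Real.pi) / 4 := by
            field_simp
    have h5 : c * (Real.sqrt (2 * Real.pi) / 2)
        ≤ c * (Real.sqrt (2 * Real.pi) - gaussTail (Real.sqrt (-2 * φ₁))) :=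
      mul_le_mul_of_nonneg_left (by linarith [hg_le φ₁]) hc.le
    simp only [hh_def]
    nlinarith
  -- IVT
  obtain ⟨φw, hφw_mem, hφw_eq⟩ : ∃ φw ∈ Icc φ₁ 0, h φw = 0 := by
    have := intermediate_value_Icc hφ₁0 hcont.continuousOn
    have h0mem : (0:ℝ) ∈ Icc (h φ₁) (h 0) := ⟨hhφ₁.le, hh0⟩
    obtain ⟨x, hx, hx0⟩ := this h0mem
    exact ⟨x, hx, hx0⟩
  -- equivalence of equations
  have key : ∀ φ : ℝ, h φ = 0 →
      ((N - ρ₀) * Real.exp φ =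
        c * (Real.sqrt (2 * Real.pi) - gaussTail (Real.sqrt (-2 * φ))) ∧
      I = Real.sqrt (2 / (Real.pi * μ)) *
            (Real.sqrt (Real.pi / 2) * (N - ρ₀) /
              (Real.sqrt (2 * Real.pi) - gaussTail (Real.sqrt (-2 * φ)))) *
            Real.exp φ) := by
    intro φ hφ
    have heq : (N - ρ₀) * Real.exp φ =
        c * (Real.sqrt (2 * Real.pi) - gaussTail (Real.sqrt (-2 * φ))) := by
      simp only [hh_def] at hφ
      linarith
    refine ⟨heq, ?_⟩
    have hD := hD_pos φ
    set D := Real.sqrt (2 * Real.pi) - gaussTail (Real.sqrt (-2 * φ)) with hD_def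
    have hsq : Real.sqrt (2 / (Real.pi * μ)) * Real.sqrt (Real.pi / 2) = 1 / Real.sqrt μ := by
      rw [← Real.sqrt_mul (by positivity)]
      rw [show 2 / (Real.pi * μ) * (Real.pi / 2) = 1 / μ by
        field_simp]
      rw [one_div, one_div, Real.sqrt_inv]
    have hμs : Real.sqrt μ ≠ 0 := ne_of_gt (Real.sqrt_pos.mpr hμ0)
    have : Real.sqrt (2 / (Real.pi * μ)) * (Real.sqrt (Real.pi / 2) * (N - ρ₀) / D) *
        Real.exp φ = (Real.sqrt (2 / (Real.pi * μ)) * Real.sqrt (Real.pi / 2)) *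
        ((N - ρ₀) * Real.exp φ) / D := by ring
    rw [this, hsq, heq, hc_def]
    field_simp
  refine ⟨φw, ?_, ?_⟩
  · obtain ⟨e1, e2⟩ := key φw hφw_eq
    exact ⟨hφw_mem.2, e1, e2⟩
  · rintro y ⟨hy0, hy1, -⟩
    have hhy : h y = 0 := by
      simp only [hh_def, gaussTail]
      rw [hy1]
      ring
    exact hmono.injective (hhy.trans hφw_eq.symm)
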